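/- There exists a dense G_δ subset A of ℝ² whose complement has Lebesgue measure zero, such that the arithmetic sum A + S¹ (where S¹ is the unit circle) has empty interior. -/

import Mathlib

open Pointwise

open MeasureTheory

theorem stmt_0 :
    ∃ A : Set (EuclideanSpace ℝ (Fin 2)),
      Dense A ∧ IsGδ A ∧ volume Aᶜ = 0 ∧
      interior (A + Metric.sphere (0 : EuclideanSpace ℝ (Fin 2)) 1) = ∅ := by
  obtain ⟨D, hDc, hDd⟩ := TopologicalSpace.exists_countable_dense (EuclideanSpace ℝ (Fin 2))
  set A : Set (EuclideanSpace ℝ (Fin 2)) := ⋂ d ∈ D, (Metric.sphere d 1)ᶜ with hA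
  have hcompl : Aᶜ = ⋃ d ∈ D, Metric.sphere d 1 := by
    simp [hA]
  have hnull : volume Aᶜ = 0 := by
    rw [hcompl]
    exact (measure_biUnion_null_iff hDc).2
      fun d _ => MeasureTheory.Measure.addHaar_sphere volume d 1
  have hdense : Dense A := by
    rw [dense_iff_inter_open]
    intro U hU hUne
    by_contra h
    have hsub : U ⊆ Aᶜ := by
      intro x hx
      intro hxA
      exact h ⟨x, hx, hxA⟩
    have := measure_mono (μ := volume) hsub
    rw [hnull] at this
    exact absurd (le_antisymm this zero_le) (hU.measure_pos volume hUne).ne'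
  refine ⟨A, hdense, ?_, hnull, ?_⟩
  · exact IsGδ.biInter hDc fun d _ => (Metric.isClosed_sphere.isOpen_compl).isGδ
  · have hsub : A + Metric.sphere (0 : EuclideanSpace ℝ (Fin 2)) 1 ⊆ Dᶜ := by
      rintro x ⟨a, ha, s, hs, rfl⟩
      intro hxD
      have haA : a ∉ Metric.sphere (a + s) 1 := by
        simp only [hA, Set.mem_iInter] at ha
        exact ha _ hxD
      apply haA
      rw [Metric.mem_sphere, dist_eq_norm]
      simp only [mem_sphere_zero_iff_norm] at hs
      simpa [norm_neg] using hs
    have : interior (A + Metric.sphere (0 : EuclideanSpace ℝ (Fin 2)) 1) ⊆ interior Dᶜ :=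
      interior_mono hsub
    rw [interior_compl, hDd.closure_eq, Set.compl_univ] at this
    exact Set.eq_empty_iff_forall_notMem.2 fun x hx => this hx
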